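/- SV = SV[Γ,s] is generated as a Lie superalgebra by the set {L_{α,0} : α ∈ Γ} ∪ {L_{0,1}} ∪ {G_{μ,0} : μ ∈ s+Γ}: the smallest ℂ-subspace of SV containing this set and closed under the bracket is SV itself. -/

import Mathlib

noncomputable section

namespace SVSuper

variable (Γ : AddSubgroup ℂ) (s : ℂ)

/-- Basis index type of `SV[Γ,s]`: `Sum.inl (α, i)` stands for `L_{α,i}` (`α ∈ Γ`),
`Sum.inr (μ, j)` stands for `G_{μ,j}` (`μ ∈ s + Γ`). -/
abbrev Idx : Type := (Γ × ℕ) ⊕ ({μ : ℂ // μ - s ∈ Γ} × ℕ)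

/-- The underlying vector space of `SV[Γ,s]`: the free `ℂ`-module on `Idx`. -/
abbrev SV : Type := Idx Γ s →₀ ℂ

/-- The basis vector `L_{α,i}`. -/
def lgen (α : ℂ) (hα : α ∈ Γ) (i : ℕ) : SV Γ s :=
  Finsupp.single (Sum.inl (⟨α, hα⟩, i)) 1

/-- The basis vector `G_{μ,j}`. -/
def ggen (μ : ℂ) (hμ : μ - s ∈ Γ) (j : ℕ) : SV Γ s :=
  Finsupp.single (Sum.inr (⟨μ, hμ⟩, j)) 1

theorem memLG {α μ : ℂ} (hα : α ∈ Γ) (hμ : μ - s ∈ Γ) : α + μ - s ∈ Γ := by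
  have h : α + μ - s = α + (μ - s) := by ring
  rw [h]; exact add_mem hα hμ

theorem memGG (hs : 2 * s ∈ Γ) {μ ν : ℂ} (hμ : μ - s ∈ Γ) (hν : ν - s ∈ Γ) :
    μ + ν ∈ Γ := by
  have h : μ + ν = (μ - s) + (ν - s) + 2 * s := by ring
  rw [h]; exact add_mem (add_mem hμ hν) hs

/-- The bracket on basis vectors (any symbol with second index `-1` is interpreted as `0`;
here this is automatic since the corresponding coefficient vanishes when `i = j = 0`). -/
def bk (hs : 2 * s ∈ Γ) : Idx Γ s → Idx Γ s → SV Γ s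
  | Sum.inl (⟨α, hα⟩, i), Sum.inl (⟨β, hβ⟩, j) =>
      (β - α) • lgen Γ s (α + β) (add_mem hα hβ) (i + j)
        + ((j : ℂ) - (i : ℂ)) • lgen Γ s (α + β) (add_mem hα hβ) (i + j - 1)
  | Sum.inl (⟨α, hα⟩, i), Sum.inr (⟨μ, hμ⟩, j) =>
      (μ - α / 2) • ggen Γ s (α + μ) (memLG Γ s hα hμ) (i + j)
        + ((j : ℂ) - (i : ℂ) / 2) • ggen Γ s (α + μ) (memLG Γ s hα hμ) (i + j - 1)
  | Sum.inr (⟨μ, hμ⟩, i), Sum.inl (⟨α, hα⟩, j) =>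
      -((μ - α / 2) • ggen Γ s (α + μ) (memLG Γ s hα hμ) (j + i)
        + ((i : ℂ) - (j : ℂ) / 2) • ggen Γ s (α + μ) (memLG Γ s hα hμ) (j + i - 1))
  | Sum.inr (⟨μ, hμ⟩, i), Sum.inr (⟨ν, hν⟩, j) =>
      (2 : ℂ) • lgen Γ s (μ + ν) (memGG Γ s hs hμ hν) (i + j)

/-- The bilinear bracket of `SV[Γ,s]`. -/
def bkt (hs : 2 * s ∈ Γ) (x y : SV Γ s) : SV Γ s :=
  x.sum fun a ca => y.sum fun b cb => (ca * cb) • bk Γ s hs a b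

/-- `x` lies in the even part `SV_0̄` (the span of the `L_{α,i}`). -/
def IsEvenElt (x : SV Γ s) : Prop := ∀ b, x (Sum.inr b) = 0

/-- `x` lies in the odd part `SV_1̄` (the span of the `G_{μ,j}`). -/
def IsOddElt (x : SV Γ s) : Prop := ∀ a, x (Sum.inl a) = 0

/-- `x` is `ℤ₂`-homogeneous. -/
def IsHomog (x : SV Γ s) : Prop := IsEvenElt Γ s x ∨ IsOddElt Γ s x

/-- `x` lies in the degree-`γ` component `SV_γ = span{L_{γ,i}, G_{γ,i}}` of the `Ω`-grading. -/
def InDeg (γ : ℂ) (x : SV Γ s) : Prop :=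
  (∀ p : Γ × ℕ, (p.1 : ℂ) ≠ γ → x (Sum.inl p) = 0) ∧
  (∀ q : {μ : ℂ // μ - s ∈ Γ} × ℕ, (q.1 : ℂ) ≠ γ → x (Sum.inr q) = 0)

/-- The group `Ω`, generated by `Γ ∪ {s}`. -/
def Omega : AddSubgroup ℂ := Γ ⊔ AddSubgroup.closure {s}

theorem gamma_mem_Omega {α : ℂ} (hα : α ∈ Γ) : α ∈ Omega Γ s :=
  AddSubgroup.mem_sup_left hα

theorem s_mem_Omega : s ∈ Omega Γ s :=
  AddSubgroup.mem_sup_right (AddSubgroup.subset_closure (Set.mem_singleton s))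

theorem smu_mem_Omega {μ : ℂ} (hμ : μ - s ∈ Γ) : μ ∈ Omega Γ s := by
  have h := add_mem (gamma_mem_Omega Γ s hμ) (s_mem_Omega Γ s)
  rwa [sub_add_cancel] at h

/-- The `Ω`-degree of a basis index. -/
def idxDeg : Idx Γ s → ℂ
  | Sum.inl p => (p.1 : ℂ)
  | Sum.inr q => (q.1 : ℂ)

theorem idxDeg_mem (a : Idx Γ s) : idxDeg Γ s a ∈ Omega Γ s := by
  cases a with
  | inl p => exact gamma_mem_Omega Γ s p.1.2
  | inr q => exact smu_mem_Omega Γ s q.1.2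

/-- The derivation `D_φ` attached to a group homomorphism `φ : (Ω,+) → (ℂ,+)`:
`D_φ (L_{α,i}) = φ(α) • L_{α,i}` and `D_φ (G_{μ,j}) = φ(μ) • G_{μ,j}`. -/
def Dphi (φ : ↥(Omega Γ s) →+ ℂ) : SV Γ s →ₗ[ℂ] SV Γ s :=
  Finsupp.lsum ℂ fun a => φ ⟨idxDeg Γ s a, idxDeg_mem Γ s a⟩ • Finsupp.lsingle a

/-- `D` is a parity-`0` (even) derivation of `SV[Γ,s]`. -/
def IsEvenDer (hs : 2 * s ∈ Γ) (D : SV Γ s →ₗ[ℂ] SV Γ s) : Prop :=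
  (∀ x, IsEvenElt Γ s x → IsEvenElt Γ s (D x)) ∧
  (∀ x, IsOddElt Γ s x → IsOddElt Γ s (D x)) ∧
  (∀ x y, IsHomog Γ s x →
    D (bkt Γ s hs x y) = bkt Γ s hs (D x) y + bkt Γ s hs x (D y))

/-- `D` is a parity-`1` (odd) derivation of `SV[Γ,s]`. -/
def IsOddDer (hs : 2 * s ∈ Γ) (D : SV Γ s →ₗ[ℂ] SV Γ s) : Prop :=
  (∀ x, IsEvenElt Γ s x → IsOddElt Γ s (D x)) ∧
  (∀ x, IsOddElt Γ s x → IsEvenElt Γ s (D x)) ∧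
  (∀ x y, IsEvenElt Γ s x →
    D (bkt Γ s hs x y) = bkt Γ s hs (D x) y + bkt Γ s hs x (D y)) ∧
  (∀ x y, IsOddElt Γ s x →
    D (bkt Γ s hs x y) = bkt Γ s hs (D x) y - bkt Γ s hs x (D y))

/-- `D` is a derivation of `SV[Γ,s]`: a sum of an even and an odd derivation. -/
def IsDer (hs : 2 * s ∈ Γ) (D : SV Γ s →ₗ[ℂ] SV Γ s) : Prop :=
  ∃ D0 D1, IsEvenDer Γ s hs D0 ∧ IsOddDer Γ s hs D1 ∧ D = D0 + D1

/-- `D` has degree `γ`: it maps `SV_δ` into `SV_{δ+γ}` for every `δ`. -/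
def HasDeg (γ : ℂ) (D : SV Γ s →ₗ[ℂ] SV Γ s) : Prop :=
  ∀ (δ : ℂ) (x : SV Γ s), InDeg Γ s δ x → InDeg Γ s (δ + γ) (D x)

/-- `ψ` is a 2-cocycle on `SV[Γ,s]` (super skew-symmetry and super Jacobi identity,
with the sign `(-1)^{|x||y|}` spelled out according to the parities). -/
def IsCocycle (hs : 2 * s ∈ Γ) (ψ : SV Γ s →ₗ[ℂ] SV Γ s →ₗ[ℂ] ℂ) : Prop :=
  (∀ x y, IsHomog Γ s x → IsHomog Γ s y → (IsEvenElt Γ s x ∨ IsEvenElt Γ s y) →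
    ψ x y = - ψ y x) ∧
  (∀ x y, IsOddElt Γ s x → IsOddElt Γ s y → ψ x y = ψ y x) ∧
  (∀ x y z, IsHomog Γ s x → IsHomog Γ s y → (IsEvenElt Γ s x ∨ IsEvenElt Γ s y) →
    ψ x (bkt Γ s hs y z) = ψ (bkt Γ s hs x y) z + ψ y (bkt Γ s hs x z)) ∧
  (∀ x y z, IsOddElt Γ s x → IsOddElt Γ s y →
    ψ x (bkt Γ s hs y z) = ψ (bkt Γ s hs x y) z - ψ y (bkt Γ s hs x z))

/-- `f : SV → ℂ` satisfies the recursive formulas associated to the 2-cocycle `ψ`. -/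
def IsAssocMap (hs : 2 * s ∈ Γ) (ψ : SV Γ s →ₗ[ℂ] SV Γ s →ₗ[ℂ] ℂ)
    (f : SV Γ s →ₗ[ℂ] ℂ) : Prop :=
  (∀ i : ℕ, f (lgen Γ s 0 (zero_mem Γ) i)
      = ψ (lgen Γ s 0 (zero_mem Γ) 0) (lgen Γ s 0 (zero_mem Γ) (i + 1)) / (i + 1)) ∧
  (∀ (α : ℂ) (hα : α ∈ Γ) (i : ℕ), α ≠ 0 →
    f (lgen Γ s α hα i)
      = (ψ (lgen Γ s 0 (zero_mem Γ) 0) (lgen Γ s α hα i) - (i : ℂ) * f (lgen Γ s α hα (i - 1))) / α) ∧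
  (∀ (h0 : (0 : ℂ) - s ∈ Γ) (i : ℕ),
    f (ggen Γ s 0 h0 i) = (2 / (2 * (i : ℂ) - 1)) * ψ (lgen Γ s 0 (zero_mem Γ) 1) (ggen Γ s 0 h0 i)) ∧
  (∀ (μ : ℂ) (hμ : μ - s ∈ Γ) (i : ℕ), μ ≠ 0 →
    f (ggen Γ s μ hμ i)
      = (ψ (lgen Γ s 0 (zero_mem Γ) 0) (ggen Γ s μ hμ i) - (i : ℂ) * f (ggen Γ s μ hμ (i - 1))) / μ)

theorem lgen_congr {a a' : ℂ} (h : a = a') (ha : a ∈ Γ) (ha' : a' ∈ Γ) {i i' : ℕ}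
    (hi : i = i') : lgen Γ s a ha i = lgen Γ s a' ha' i' := by subst h; subst hi; rfl

theorem ggen_congr {a a' : ℂ} (h : a = a') (ha : a - s ∈ Γ) (ha' : a' - s ∈ Γ) {i i' : ℕ}
    (hi : i = i') : ggen Γ s a ha i = ggen Γ s a' ha' i' := by subst h; subst hi; rfl

theorem bkt_single (hs : 2 * s ∈ Γ) (a b : Idx Γ s) :
    bkt Γ s hs (Finsupp.single a 1) (Finsupp.single b 1) = bk Γ s hs a b := by
  rw [bkt, Finsupp.sum_single_index, Finsupp.sum_single_index] <;> simp

theorem bkt_LL (hs : 2 * s ∈ Γ) {α β : ℂ} (hα : α ∈ Γ) (hβ : β ∈ Γ) (i j : ℕ) :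
    bkt Γ s hs (lgen Γ s α hα i) (lgen Γ s β hβ j)
      = (β - α) • lgen Γ s (α + β) (add_mem hα hβ) (i + j)
        + ((j : ℂ) - (i : ℂ)) • lgen Γ s (α + β) (add_mem hα hβ) (i + j - 1) := by
  rw [lgen, lgen, bkt_single]; rfl

theorem bkt_LG (hs : 2 * s ∈ Γ) {α μ : ℂ} (hα : α ∈ Γ) (hμ : μ - s ∈ Γ) (i j : ℕ) :
    bkt Γ s hs (lgen Γ s α hα i) (ggen Γ s μ hμ j)
      = (μ - α / 2) • ggen Γ s (α + μ) (memLG Γ s hα hμ) (i + j)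
        + ((j : ℂ) - (i : ℂ) / 2) • ggen Γ s (α + μ) (memLG Γ s hα hμ) (i + j - 1) := by
  rw [lgen, ggen, bkt_single]; rfl

theorem extract {M : Type*} [AddCommGroup M] [Module ℂ M] {p : Submodule ℂ M}
    {v w : M} {a c : ℂ} (ha : a ≠ 0) (h : a • v + c • w ∈ p) (hw : w ∈ p) : v ∈ p := by
  have h2 : a • v ∈ p := by
    have := p.sub_mem h (p.smul_mem c hw); simpa using this
  have := p.smul_mem a⁻¹ h2
  rwa [inv_smul_smul₀ ha] at this

/-- `SV[Γ,s]` is generated by `{L_{α,0}} ∪ {L_{0,1}} ∪ {G_{μ,0}}`: any subspace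
containing these elements and closed under the bracket is all of `SV`. -/
theorem SV_generated (Γ : AddSubgroup ℂ) (hΓ : ∀ n : ℤ, (n : ℂ) ∈ Γ)
    (s : ℂ) (hs : 2 * s ∈ Γ) :
    ∀ p : Submodule ℂ (SV Γ s),
      (∀ (α : ℂ) (hα : α ∈ Γ), lgen Γ s α hα 0 ∈ p) →
      lgen Γ s 0 (zero_mem Γ) 1 ∈ p →
      (∀ (μ : ℂ) (hμ : μ - s ∈ Γ), ggen Γ s μ hμ 0 ∈ p) →
      (∀ x y : SV Γ s, x ∈ p → y ∈ p → bkt Γ s hs x y ∈ p) →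
      ∀ x : SV Γ s, x ∈ p := by
  intro p hL0 hL01 hG0 hcl
  have h1 : (1 : ℂ) ∈ Γ := by simpa using hΓ 1
  have hm1 : (-1 : ℂ) ∈ Γ := by simpa using hΓ (-1)
  -- L_{α,i} for α ≠ 0, by induction on i using [L_{0,1}, L_{α,i}]
  have hLne : ∀ (i : ℕ) (α : ℂ) (hα : α ∈ Γ), α ≠ 0 → lgen Γ s α hα i ∈ p := by
    intro i
    induction i with
    | zero => intro α hα _; exact hL0 α hα
    | succ i ih =>
      intro α hα h0
      have hb := hcl _ _ hL01 (ih α hα h0)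
      rw [bkt_LL] at hb
      rw [lgen_congr Γ s (zero_add α) _ hα (by omega : 1 + i = i + 1),
          lgen_congr Γ s (zero_add α) _ hα (by omega : 1 + i - 1 = i)] at hb
      exact extract (by simpa using h0) hb (ih α hα h0)
  -- L_{0,i}, by induction using [L_{1,1}, L_{-1,i}]
  have hLz : ∀ (h0 : (0 : ℂ) ∈ Γ) (i : ℕ), lgen Γ s 0 h0 i ∈ p := by
    intro h0 i
    induction i with
    | zero => exact hL0 0 h0
    | succ i ih =>
      have hb := hcl _ _ (hLne 1 1 h1 one_ne_zero) (hLne i (-1) hm1 (by norm_num))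
      rw [bkt_LL] at hb
      rw [lgen_congr Γ s (by norm_num : (1 : ℂ) + -1 = 0) _ h0 (by omega : 1 + i = i + 1),
          lgen_congr Γ s (by norm_num : (1 : ℂ) + -1 = 0) _ h0 (by omega : 1 + i - 1 = i)] at hb
      exact extract (by norm_num) hb ih
  -- G_{μ,i} for μ ≠ 0, by induction using [L_{0,1}, G_{μ,i}]
  have hGne : ∀ (i : ℕ) (μ : ℂ) (hμ : μ - s ∈ Γ), μ ≠ 0 → ggen Γ s μ hμ i ∈ p := by
    intro i
    induction i with
    | zero => intro μ hμ _; exact hG0 μ hμ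
    | succ i ih =>
      intro μ hμ h0
      have hb := hcl _ _ hL01 (ih μ hμ h0)
      rw [bkt_LG] at hb
      rw [ggen_congr Γ s (zero_add μ) _ hμ (by omega : 1 + i = i + 1),
          ggen_congr Γ s (zero_add μ) _ hμ (by omega : 1 + i - 1 = i)] at hb
      exact extract (by simpa using h0) hb (ih μ hμ h0)
  -- G_{0,i}, by induction using [L_{1,1}, G_{-1,i}]
  have hGz : ∀ (h0 : (0 : ℂ) - s ∈ Γ) (i : ℕ), ggen Γ s 0 h0 i ∈ p := by
    intro h0 i
    have hm1s : (-1 : ℂ) - s ∈ Γ := by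
      have := add_mem hm1 h0
      rwa [show (-1 : ℂ) + (0 - s) = -1 - s by ring] at this
    induction i with
    | zero => exact hG0 0 h0
    | succ i ih =>
      have hb := hcl _ _ (hLne 1 1 h1 one_ne_zero) (hGne i (-1) hm1s (by norm_num))
      rw [bkt_LG] at hb
      rw [ggen_congr Γ s (by norm_num : (1 : ℂ) + -1 = 0) _ h0 (by omega : 1 + i = i + 1),
          ggen_congr Γ s (by norm_num : (1 : ℂ) + -1 = 0) _ h0 (by omega : 1 + i - 1 = i)] at hb
      exact extract (by norm_num) hb ih
  -- every basis vector is in p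
  have hbasis : ∀ a : Idx Γ s, Finsupp.single a (1 : ℂ) ∈ p := by
    rintro (⟨⟨α, hα⟩, i⟩ | ⟨⟨μ, hμ⟩, i⟩)
    · by_cases h : α = 0
      · subst h; exact hLz hα i
      · exact hLne i α hα h
    · by_cases h : μ = 0
      · subst h; exact hGz hμ i
      · exact hGne i μ hμ h
  intro x
  induction x using Finsupp.induction with
  | zero => exact p.zero_mem
  | single_add a b f _ _ ihf =>
    refine p.add_mem ?_ ihf
    rw [show Finsupp.single a b = b • Finsupp.single a (1 : ℂ) by
      rw [Finsupp.smul_single, smul_eq_mul, mul_one]]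
    exact p.smul_mem b (hbasis a)

end SVSuper
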